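/- Let X ⊆ ℂ² be compact and let f = p/q be a rational function on ℂ², where p and q are relatively prime polynomials and q is nonvanishing on X. Suppose Γ = f(X) satisfies R(Γ) = C(Γ). If (z₀,w₀) ∈ h_R(X), then q(z₀,w₀) ≠ 0, the value t₀ = p(z₀,w₀)/q(z₀,w₀) belongs to Γ, and for every polynomial h : ℂ² → ℂ one has |h(z₀,w₀)| ≤ sup_{X_{t₀}} |h|; that is, (z₀,w₀) lies in the polynomial hull of the fiber X_{t₀}. -/

import Mathlib

open Complex Set

/-- Evaluation of a polynomial in two variables at a point of `ℂ × ℂ`. -/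
noncomputable def evalP (P : MvPolynomial (Fin 2) ℂ) (x : ℂ × ℂ) : ℂ :=
  MvPolynomial.eval ![x.1, x.2] P

/-- `ψ` belongs to `R(X)`: it is a uniform limit on `X` of rational functions `P/Q`
with `Q` nonvanishing on `X`. -/
def MemRatAlg (X : Set (ℂ × ℂ)) (ψ : ℂ × ℂ → ℂ) : Prop :=
  ∀ ε > 0, ∃ P Q : MvPolynomial (Fin 2) ℂ, (∀ x ∈ X, evalP Q x ≠ 0) ∧
    ∀ x ∈ X, ‖ψ x - evalP P x / evalP Q x‖ < ε

/-- `ψ` belongs to `R(Γ)` for a compact set `Γ ⊆ ℂ`: uniform limit on `Γ` of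
one-variable rational functions with poles off `Γ`. -/
def MemRatAlg1 (Γ : Set ℂ) (ψ : ℂ → ℂ) : Prop :=
  ∀ ε > 0, ∃ P Q : Polynomial ℂ, (∀ t ∈ Γ, Polynomial.eval t Q ≠ 0) ∧
    ∀ t ∈ Γ, ‖ψ t - Polynomial.eval t P / Polynomial.eval t Q‖ < ε
/-- The rational hull of a compact set `X ⊆ ℂ²`. -/
def rationalHull (X : Set (ℂ × ℂ)) : Set (ℂ × ℂ) :=
  {x | ∀ P : MvPolynomial (Fin 2) ℂ, evalP P x ∈ evalP P '' X}

lemma evalP_mul (P Q : MvPolynomial (Fin 2) ℂ) (x : ℂ × ℂ) :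
    evalP (P * Q) x = evalP P x * evalP Q x := by simp [evalP]

lemma continuous_evalP (h : MvPolynomial (Fin 2) ℂ) : Continuous (evalP h) := by
  unfold evalP
  induction h using MvPolynomial.induction_on with
  | C a => simpa using continuous_const
  | add p q hp hq => simp only [map_add]; exact hp.add hq
  | mul_X p n hp =>
    simp only [map_mul, MvPolynomial.eval_X]
    refine hp.mul ?_
    fin_cases n
    · simpa using continuous_fst
    · simpa using continuous_snd

noncomputable def lift1 (P : Polynomial ℂ) (p q : MvPolynomial (Fin 2) ℂ) (N : ℕ) :
    MvPolynomial (Fin 2) ℂ :=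
  ∑ i ∈ Finset.range (N+1), MvPolynomial.C (P.coeff i) * p^i * q^(N-i)

lemma evalP_lift1 (P : Polynomial ℂ) (p q : MvPolynomial (Fin 2) ℂ) (N : ℕ)
    (hN : P.natDegree ≤ N) (x : ℂ × ℂ) (hqx : evalP q x ≠ 0) :
    evalP (lift1 P p q N) x
      = (evalP q x)^N * Polynomial.eval (evalP p x / evalP q x) P := by
  have hev : Polynomial.eval (evalP p x / evalP q x) P
      = ∑ i ∈ Finset.range (N+1), P.coeff i * (evalP p x / evalP q x) ^ i :=
    Polynomial.eval_eq_sum_range' (Nat.lt_succ_of_le hN) _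
  rw [hev, Finset.mul_sum]
  unfold lift1 evalP
  rw [map_sum]
  refine Finset.sum_congr rfl fun i hi => ?_
  have hiN : i ≤ N := Nat.lt_succ_iff.mp (Finset.mem_range.mp hi)
  have hqx' : (MvPolynomial.eval ![x.1, x.2]) q ≠ 0 := hqx
  simp only [map_mul, map_pow, MvPolynomial.eval_C]
  rw [div_pow, pow_sub₀ _ hqx' hiN]
  field_simp

lemma hull_value {X : Set (ℂ × ℂ)} {x₀ : ℂ × ℂ} (hx₀ : x₀ ∈ rationalHull X)
    (F G : MvPolynomial (Fin 2) ℂ) :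
    ∃ x ∈ X, evalP F x * evalP G x₀ = evalP F x₀ * evalP G x := by
  obtain ⟨x, hxX, hx⟩ :=
    hx₀ (F * MvPolynomial.C (evalP G x₀) - MvPolynomial.C (evalP F x₀) * G)
  refine ⟨x, hxX, ?_⟩
  have h0 : evalP (F * MvPolynomial.C (evalP G x₀) - MvPolynomial.C (evalP F x₀) * G) x₀
      = 0 := by
    simp only [evalP, map_sub, map_mul, MvPolynomial.eval_C]
    ring
  have hxv := hx.trans h0
  simp only [evalP, map_sub, map_mul, MvPolynomial.eval_C] at hxv ⊢
  linear_combination hxv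

set_option maxHeartbeats 1000000 in
/-- If `X ⊆ ℂ²` is compact, `f = p/q` with `q` nonvanishing on `X`, and `Γ = f(X)` satisfies
`R(Γ) = C(Γ)`, then every point `(z₀,w₀)` of the rational hull of `X` satisfies
`q(z₀,w₀) ≠ 0`, `t₀ = f(z₀,w₀) ∈ Γ`, and `(z₀,w₀)` lies in the polynomial hull of the
fiber `X_{t₀}`. -/
theorem rationalHull_subset_fiber_polyHull
    (X : Set (ℂ × ℂ)) (hX : IsCompact X)
    (p q : MvPolynomial (Fin 2) ℂ) (hpq : IsCoprime p q)
    (hq : ∀ x ∈ X, evalP q x ≠ 0)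
    (f : ℂ × ℂ → ℂ) (hf : ∀ x, f x = evalP p x / evalP q x)
    (Γ : Set ℂ) (hΓ : Γ = f '' X)
    (hRΓ : ∀ g : ℂ → ℂ, ContinuousOn g Γ → MemRatAlg1 Γ g)
    (x₀ : ℂ × ℂ) (hx₀ : x₀ ∈ rationalHull X) :
    evalP q x₀ ≠ 0 ∧ f x₀ ∈ Γ ∧
      ∀ h : MvPolynomial (Fin 2) ℂ,
        ‖evalP h x₀‖ ≤
          sSup ((fun x => ‖evalP h x‖) ''
            {x ∈ X | evalP p x = f x₀ * evalP q x}) := by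
  -- q(x₀) ≠ 0
  obtain ⟨xq, hxqX, hxq⟩ := hx₀ q
  have hq0 : evalP q x₀ ≠ 0 := hxq ▸ hq xq hxqX
  set t₀ := f x₀ with ht₀def
  have hft : evalP p x₀ = t₀ * evalP q x₀ := by
    rw [ht₀def, hf]; field_simp
  have hfx_mem : ∀ x ∈ X, f x ∈ Γ := fun x hx => hΓ ▸ mem_image_of_mem f hx
  -- a point of the fiber
  obtain ⟨xf, hxfX, hxf⟩ := hull_value hx₀ p q
  have hpxf : evalP p xf = t₀ * evalP q xf := by
    apply mul_right_cancel₀ hq0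
    linear_combination hxf + evalP q xf * hft
  have hfxf : f xf = t₀ := by
    rw [hf, div_eq_iff (hq xf hxfX)]; exact hpxf
  have ht₀Γ : t₀ ∈ Γ := hΓ ▸ ⟨xf, hxfX, hfxf⟩
  refine ⟨hq0, ht₀Γ, ?_⟩
  intro h
  have habs_cont : Continuous fun x => ‖evalP h x‖ :=
    continuous_norm.comp (continuous_evalP h)
  set S : Set (ℂ × ℂ) := {x ∈ X | evalP p x = t₀ * evalP q x} with hS
  have hScl : IsClosed S :=
    hX.isClosed.inter (isClosed_eq (continuous_evalP p) (continuous_const.mul (continuous_evalP q)))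
  have hScpt : IsCompact S := hX.of_isClosed_subset hScl (fun x hx => hx.1)
  have hxfS : xf ∈ S := ⟨hxfX, hpxf⟩
  set M := sSup ((fun x => ‖evalP h x‖) '' S) with hM
  have hSbdd : BddAbove ((fun x => ‖evalP h x‖) '' S) :=
    (hScpt.image habs_cont).bddAbove
  have hMub : ∀ x ∈ S, ‖evalP h x‖ ≤ M :=
    fun x hx => le_csSup hSbdd (mem_image_of_mem _ hx)
  have hM0 : 0 ≤ M := le_trans (norm_nonneg _) (hMub xf hxfS)
  by_contra hcon
  push_neg at hcon
  set a := ‖evalP h x₀‖ with ha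
  set ε := (a - M) / 2 with hε
  have hε0 : 0 < ε := by simp only [hε]; linarith
  have haM : a = M + 2 * ε := by simp only [hε]; ring
  -- sup of |h| on X
  have hXbdd : BddAbove ((fun x => ‖evalP h x‖) '' X) :=
    (hX.image habs_cont).bddAbove
  set H := sSup ((fun x => ‖evalP h x‖) '' X) with hH
  have hHub : ∀ x ∈ X, ‖evalP h x‖ ≤ H :=
    fun x hx => le_csSup hXbdd (mem_image_of_mem _ hx)
  have hH0 : 0 ≤ H := le_trans (norm_nonneg _) (hHub xq hxqX)
  -- the compact set where |h| is big, and its image under f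
  set KX : Set (ℂ × ℂ) := {x ∈ X | M + ε ≤ ‖evalP h x‖} with hKX
  have hKXcl : IsClosed KX :=
    hX.isClosed.inter (isClosed_le continuous_const habs_cont)
  have hKXcpt : IsCompact KX := hX.of_isClosed_subset hKXcl (fun x hx => hx.1)
  have hfcont : ContinuousOn f X := by
    have : f = fun x => evalP p x / evalP q x := funext hf
    rw [this]
    exact ContinuousOn.div (continuous_evalP p).continuousOn (continuous_evalP q).continuousOn hq
  set K : Set ℂ := f '' KX with hKdef
  have hKcpt : IsCompact K := hKXcpt.image_of_continuousOn (hfcont.mono fun x hx => hx.1)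
  have ht₀K : t₀ ∉ K := by
    rintro ⟨x, hxKX, hfx⟩
    have hpx : evalP p x = t₀ * evalP q x := by
      rw [← hfx, hf, div_mul_cancel₀ _ (hq x hxKX.1)]
    have := hMub x ⟨hxKX.1, hpx⟩
    have := hxKX.2
    linarith
  -- Urysohn
  obtain ⟨g, hg0, hg1, hg01⟩ := exists_continuous_zero_one_of_isClosed hKcpt.isClosed
    isClosed_singleton (Set.disjoint_singleton_right.mpr ht₀K)
  set gC : ℂ → ℂ := fun t => ((g t : ℝ) : ℂ) with hgC
  have hgCcont : ContinuousOn gC Γ :=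
    (Complex.continuous_ofReal.comp g.continuous).continuousOn
  -- choose δ
  set b := M + ε with hb
  set D := H + a + b + 1 with hD
  have hD0 : 0 < D := by simp only [hD, hb]; positivity
  set δ := ε / (2 * D) with hδ
  have hδ0 : 0 < δ := by positivity
  have hδD : 2 * (δ * D) = ε := by
    rw [hδ]
    field_simp
  have hδH : δ * H ≤ ε / 2 := by nlinarith [mul_le_mul_of_nonneg_left (show H ≤ D by simp only [hD, hb]; nlinarith) hδ0.le]
  have hδab : δ * (a + b) ≤ ε / 2 := by nlinarith [mul_le_mul_of_nonneg_left (show a + b ≤ D by simp only [hD]; nlinarith [norm_nonneg (evalP h x₀)]) hδ0.le]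
  have ha0 : 0 ≤ a := norm_nonneg _
  have hδa : δ * a ≤ ε / 2 := by nlinarith [mul_le_mul_of_nonneg_left (show a ≤ D by simp only [hD, hb]; nlinarith) hδ0.le]
  -- rational approximation of gC on Γ
  obtain ⟨P, Q, hQ, happ⟩ := hRΓ gC hgCcont δ hδ0
  set r : ℂ → ℂ := fun t => Polynomial.eval t P / Polynomial.eval t Q with hr
  set N := max P.natDegree Q.natDegree with hN
  set A := lift1 P p q N with hA
  set B := lift1 Q p q N with hB
  obtain ⟨x, hxX, hE⟩ := hull_value hx₀ (A * h) B
  rw [evalP_mul, evalP_mul] at hE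
  have hqx : evalP q x ≠ 0 := hq x hxX
  have hfxΓ : f x ∈ Γ := hfx_mem x hxX
  have hAx : evalP A x = (evalP q x)^N * Polynomial.eval (f x) P := by
    rw [hA, evalP_lift1 P p q N (le_max_left _ _) x hqx, hf]
  have hBx : evalP B x = (evalP q x)^N * Polynomial.eval (f x) Q := by
    rw [hB, evalP_lift1 Q p q N (le_max_right _ _) x hqx, hf]
  have hAx₀ : evalP A x₀ = (evalP q x₀)^N * Polynomial.eval t₀ P := by
    rw [hA, evalP_lift1 P p q N (le_max_left _ _) x₀ hq0, ← hf]
  have hBx₀ : evalP B x₀ = (evalP q x₀)^N * Polynomial.eval t₀ Q := by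
    rw [hB, evalP_lift1 Q p q N (le_max_right _ _) x₀ hq0, ← hf]
  have hQx : Polynomial.eval (f x) Q ≠ 0 := hQ _ hfxΓ
  have hQt₀ : Polynomial.eval t₀ Q ≠ 0 := hQ _ ht₀Γ
  have hqxN : (evalP q x)^N ≠ 0 := pow_ne_zero _ hqx
  have hq0N : (evalP q x₀)^N ≠ 0 := pow_ne_zero _ hq0
  rw [hAx, hBx, hAx₀, hBx₀] at hE
  have hE' : (Polynomial.eval (f x) P * evalP h x) * Polynomial.eval t₀ Q
      = (Polynomial.eval t₀ P * evalP h x₀) * Polynomial.eval (f x) Q := by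
    apply mul_left_cancel₀ (mul_ne_zero hqxN hq0N)
    linear_combination hE
  have key : r (f x) * evalP h x = r t₀ * evalP h x₀ := by
    simp only [hr]
    rw [div_mul_eq_mul_div, div_mul_eq_mul_div, div_eq_div_iff hQx hQt₀]
    linear_combination hE'
  have habsEq : ‖r (f x)‖ * ‖evalP h x‖
      = ‖r t₀‖ * a := by
    rw [ha, ← norm_mul, ← norm_mul, key]
  -- |r t₀| ≥ 1 - δ
  have hgt₀ : gC t₀ = 1 := by
    simp only [hgC]
    rw [hg1 (mem_singleton t₀)]
    norm_num
  have happt₀ := happ t₀ ht₀Γ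
  rw [hgt₀] at happt₀
  have hrt₀ : 1 - δ ≤ ‖r t₀‖ := by
    have h1 := norm_sub_norm_le (1 : ℂ) (1 - r t₀)
    simp only [sub_sub_cancel, norm_one] at h1
    have : ‖1 - r t₀‖ < δ := happt₀
    linarith
  by_cases hxK : M + ε ≤ ‖evalP h x‖
  · -- x in KX : |r (f x)| < δ
    have hfxK : f x ∈ K := mem_image_of_mem f ⟨hxX, hxK⟩
    have hg0fx : gC (f x) = 0 := by
      simp only [hgC]
      rw [hg0 hfxK]
      norm_num
    have happx := happ (f x) hfxΓ
    rw [hg0fx, zero_sub, norm_neg] at happx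
    have hhx : ‖evalP h x‖ ≤ H := hHub x hxX
    have hle : ‖r (f x)‖ * ‖evalP h x‖ ≤ δ * H :=
      mul_le_mul happx.le hhx (norm_nonneg _) hδ0.le
    rw [habsEq] at hle
    have : (1 - δ) * a ≤ δ * H :=
      le_trans (mul_le_mul_of_nonneg_right hrt₀ ha0) hle
    nlinarith
  · -- |h x| < M + ε, |r (f x)| ≤ 1 + δ
    push_neg at hxK
    have hgfx : ‖gC (f x)‖ ≤ 1 := by
      simp only [hgC, Complex.norm_real, Real.norm_eq_abs]
      rw [_root_.abs_of_nonneg (hg01 (f x)).1]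
      exact (hg01 (f x)).2
    have happx := happ (f x) hfxΓ
    have hrfx : ‖r (f x)‖ ≤ 1 + δ := by
      have h1 := norm_sub_norm_le (r (f x)) (r (f x) - gC (f x))
      simp only [sub_sub_cancel] at h1
      rw [norm_sub_rev] at h1
      linarith
    have hle : ‖r (f x)‖ * ‖evalP h x‖ ≤ (1 + δ) * b := by
      apply mul_le_mul hrfx hxK.le (norm_nonneg _) (by linarith : (0:ℝ) ≤ 1 + δ)
    rw [habsEq] at hle
    have : (1 - δ) * a ≤ (1 + δ) * b :=
      le_trans (mul_le_mul_of_nonneg_right hrt₀ ha0) hle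
    nlinarith
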